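/- Fix separable complex Hilbert spaces ℋ and 𝒦, a self-adjoint (possibly unbounded) operator H₀ in ℋ, and a bounded operator K : 𝒦 → ℋ. Let L₁, L₂ be bounded self-adjoint operators in 𝒦. Then for every z ∈ ℂ∖ℝ the operators I_𝒦 + (L₂−L₁)M_{L₁}(z) and I_𝒦 + M_{L₁}(z)(L₂−L₁) are boundedly invertible in B(𝒦) and M_{L₂}(z) = M_{L₁}(z)(I_𝒦 + (L₂−L₁)M_{L₁}(z))^{-1} = (I_𝒦 + M_{L₁}(z)(L₂−L₁))^{-1} M_{L₁}(z). -/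

import Mathlib

open ContinuousLinearMap

/-- `R` is the resolvent family of the (possibly unbounded) operator `T`:
for every non-real `z`, `R z` is a two-sided bounded inverse of `T - z`. -/
def IsResolventOf {H : Type*} [NormedAddCommGroup H] [InnerProductSpace ℂ H]
    [CompleteSpace H] (T : H →ₗ.[ℂ] H) (R : ℂ → H →L[ℂ] H) : Prop :=
  ∀ z : ℂ, z.im ≠ 0 →
    (∃ hmem : ∀ x : H, R z x ∈ T.domain,
      (∀ x : H, T ⟨R z x, hmem x⟩ - z • R z x = x)) ∧
    (∀ u : T.domain, R z (T u - z • (u : H)) = u)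

/-- Symmetry of an unbounded operator. -/
def PMapSymmetric {H : Type*} [NormedAddCommGroup H] [InnerProductSpace ℂ H]
    (T : H →ₗ.[ℂ] H) : Prop :=
  ∀ u v : T.domain, (inner ℂ (T u) (v : H) : ℂ) = inner ℂ (u : H) (T v)

/-- Theorem 2.3 of Gesztesy–Kalton–Makarov–Tsekanovskii.
Let `H₀` be a self-adjoint operator in the separable complex Hilbert space `ℋ`
(encoded as a densely defined symmetric operator possessing a resolvent at every
non-real point), `K : 𝒦 → ℋ` bounded, and `L₁, L₂` bounded self-adjoint operators in `𝒦`.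
With `H_{Lℓ} = H₀ + K Lℓ K*` (same domain as `H₀`, with resolvents `R₁, R₂`) and
`M_{Lℓ}(z) = K* (H_{Lℓ} - z)⁻¹ K`, for every `z ∈ ℂ∖ℝ` the operators
`I + (L₂-L₁) M_{L₁}(z)` and `I + M_{L₁}(z) (L₂-L₁)` are boundedly invertible and
`M_{L₂}(z) = M_{L₁}(z) (I + (L₂-L₁) M_{L₁}(z))⁻¹ = (I + M_{L₁}(z)(L₂-L₁))⁻¹ M_{L₁}(z)`. -/
theorem statement0
    {ℋ : Type*} [NormedAddCommGroup ℋ] [InnerProductSpace ℂ ℋ] [CompleteSpace ℋ]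
    [TopologicalSpace.SeparableSpace ℋ]
    {𝒦 : Type*} [NormedAddCommGroup 𝒦] [InnerProductSpace ℂ 𝒦] [CompleteSpace 𝒦]
    [TopologicalSpace.SeparableSpace 𝒦]
    (H₀ : ℋ →ₗ.[ℂ] ℋ) (hdense : Dense (H₀.domain : Set ℋ))
    (hsym : PMapSymmetric H₀)
    (R₀ : ℂ → ℋ →L[ℂ] ℋ) (hR₀ : IsResolventOf H₀ R₀)  -- self-adjointness of H₀
    (K : 𝒦 →L[ℂ] ℋ)
    (L₁ L₂ : 𝒦 →L[ℂ] 𝒦) (hL₁ : IsSelfAdjoint L₁) (hL₂ : IsSelfAdjoint L₂)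
    -- the perturbed operators H_{Lℓ} = H₀ + K Lℓ K*, dom(H_{Lℓ}) = dom(H₀):
    (HL₁ HL₂ : ℋ →ₗ.[ℂ] ℋ)
    (hdom₁ : HL₁.domain = H₀.domain) (hdom₂ : HL₂.domain = H₀.domain)
    (hHL₁ : ∀ (x : ℋ) (hx : x ∈ H₀.domain) (hx' : x ∈ HL₁.domain),
      HL₁ ⟨x, hx'⟩ = H₀ ⟨x, hx⟩ + K (L₁ ((adjoint K) x)))
    (hHL₂ : ∀ (x : ℋ) (hx : x ∈ H₀.domain) (hx' : x ∈ HL₂.domain),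
      HL₂ ⟨x, hx'⟩ = H₀ ⟨x, hx⟩ + K (L₂ ((adjoint K) x)))
    (R₁ R₂ : ℂ → ℋ →L[ℂ] ℋ)
    (hR₁ : IsResolventOf HL₁ R₁) (hR₂ : IsResolventOf HL₂ R₂)
    -- the Herglotz operators M_{Lℓ}(z) = K* (H_{Lℓ} - z)⁻¹ K:
    (M₁ M₂ : ℂ → 𝒦 →L[ℂ] 𝒦)
    (hM₁ : ∀ z : ℂ, M₁ z = (adjoint K).comp ((R₁ z).comp K))
    (hM₂ : ∀ z : ℂ, M₂ z = (adjoint K).comp ((R₂ z).comp K)) :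
    ∀ z : ℂ, z.im ≠ 0 →
      IsUnit (1 + (L₂ - L₁) * M₁ z) ∧
      IsUnit (1 + M₁ z * (L₂ - L₁)) ∧
      M₂ z = M₁ z * Ring.inverse (1 + (L₂ - L₁) * M₁ z) ∧
      M₂ z = Ring.inverse (1 + M₁ z * (L₂ - L₁)) * M₁ z := by
  intro z hz
  set D := L₂ - L₁ with hD
  have hDapp : ∀ k : 𝒦, K (D k) = K (L₂ k) - K (L₁ k) := by
    intro k; rw [hD]; simp [map_sub]
  -- pointwise second resolvent identity, one direction
  have key : ∀ x : ℋ, R₁ z (K (D ((adjoint K) (R₂ z x)))) = R₁ z x - R₂ z x := by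
    intro x
    obtain ⟨⟨hmem₂, heq₂⟩, _⟩ := hR₂ z hz
    obtain ⟨_, hinv₁⟩ := hR₁ z hz
    set u : ℋ := R₂ z x with hu
    have h0 : u ∈ H₀.domain := hdom₂ ▸ hmem₂ x
    have h1 : u ∈ HL₁.domain := hdom₁ ▸ h0
    have e2' : H₀ ⟨u, h0⟩ + K (L₂ ((adjoint K) u)) - z • u = x := by
      rw [← hHL₂ u h0 (hmem₂ x)]; exact heq₂ x
    have e1 : HL₁ ⟨u, h1⟩ - z • u = x - K (D ((adjoint K) u)) := by
      rw [hHL₁ u h0 h1, hDapp, ← e2']; abel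
    have h3 : R₁ z (HL₁ ⟨u, h1⟩ - z • u) = u := hinv₁ ⟨u, h1⟩
    rw [e1, map_sub] at h3
    exact eq_sub_of_add_eq' (sub_eq_iff_eq_add.mp h3).symm
  -- pointwise second resolvent identity, other direction
  have key' : ∀ x : ℋ, R₂ z (K (D ((adjoint K) (R₁ z x)))) = R₁ z x - R₂ z x := by
    intro x
    obtain ⟨⟨hmem₁, heq₁⟩, _⟩ := hR₁ z hz
    obtain ⟨_, hinv₂⟩ := hR₂ z hz
    set u : ℋ := R₁ z x with hu
    have h0 : u ∈ H₀.domain := hdom₁ ▸ hmem₁ x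
    have h2 : u ∈ HL₂.domain := hdom₂ ▸ h0
    have e1' : H₀ ⟨u, h0⟩ + K (L₁ ((adjoint K) u)) - z • u = x := by
      rw [← hHL₁ u h0 (hmem₁ x)]; exact heq₁ x
    have e2 : HL₂ ⟨u, h2⟩ - z • u = x + K (D ((adjoint K) u)) := by
      rw [hHL₂ u h0 h2, hDapp, ← e1']; abel
    have h3 : R₂ z (HL₂ ⟨u, h2⟩ - z • u) = u := hinv₂ ⟨u, h2⟩
    rw [e2, map_add] at h3
    exact eq_sub_of_add_eq' h3
  -- operator identities
  have h2 : M₁ z * D * M₂ z = M₁ z - M₂ z := by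
    ext k
    simp only [hM₁ z, hM₂ z, ContinuousLinearMap.sub_apply, ContinuousLinearMap.mul_apply,
      ContinuousLinearMap.coe_comp', Function.comp_apply]
    rw [key (K k), map_sub]
  have h1 : M₂ z * D * M₁ z = M₁ z - M₂ z := by
    ext k
    simp only [hM₁ z, hM₂ z, ContinuousLinearMap.sub_apply, ContinuousLinearMap.mul_apply,
      ContinuousLinearMap.coe_comp', Function.comp_apply]
    rw [key' (K k), map_sub]
  set a := M₁ z
  set b := M₂ z
  have hab : a - b - a * D * b = 0 := by rw [h2]; abel
  have hba : a - b - b * D * a = 0 := by rw [h1]; abel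
  have p1 : (1 + D * a) * (1 - D * b) = 1 := by
    have e : (1 + D * a) * (1 - D * b) = 1 + D * (a - b - a * D * b) := by noncomm_ring
    rw [e, hab, mul_zero, add_zero]
  have p2 : (1 - D * b) * (1 + D * a) = 1 := by
    have e : (1 - D * b) * (1 + D * a) = 1 + D * (a - b - b * D * a) := by noncomm_ring
    rw [e, hba, mul_zero, add_zero]
  have q1 : (1 + a * D) * (1 - b * D) = 1 := by
    have e : (1 + a * D) * (1 - b * D) = 1 + (a - b - a * D * b) * D := by noncomm_ring
    rw [e, hab, zero_mul, add_zero]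
  have q2 : (1 - b * D) * (1 + a * D) = 1 := by
    have e : (1 - b * D) * (1 + a * D) = 1 + (a - b - b * D * a) * D := by noncomm_ring
    rw [e, hba, zero_mul, add_zero]
  have u1 : (𝒦 →L[ℂ] 𝒦)ˣ := ⟨1 + D * a, 1 - D * b, p1, p2⟩
  refine ⟨⟨⟨1 + D * a, 1 - D * b, p1, p2⟩, rfl⟩, ⟨⟨1 + a * D, 1 - b * D, q1, q2⟩, rfl⟩, ?_, ?_⟩
  · have hi : Ring.inverse (1 + D * a) = 1 - D * b :=
      Ring.inverse_unit ⟨1 + D * a, 1 - D * b, p1, p2⟩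
    rw [hi]
    have e : a * (1 - D * b) = b + (a - b - a * D * b) := by noncomm_ring
    rw [e, hab, add_zero]
  · have hi : Ring.inverse (1 + a * D) = 1 - b * D :=
      Ring.inverse_unit ⟨1 + a * D, 1 - b * D, q1, q2⟩
    rw [hi]
    have e : (1 - b * D) * a = b + (a - b - b * D * a) := by noncomm_ring
    rw [e, hba, add_zero]
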